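/- Let σ₃ = ⟨(0,1,0),(0,0,1),(6,8,9)⟩ ⊆ ℝ³ (a maximal cone of the dual Newton polyhedron of the hypersurface y³ + xz² − x⁴ = 0). Then the Hilbert basis of σ₃ is exactly { (0,1,0), (0,0,1), (6,8,9), (1,2,2), (2,3,3), (3,4,5) }; that is, these six vectors are precisely the irreducible elements of S_{σ₃} = σ₃ ∩ ℤ³, and they generate the monoid S_{σ₃}. -/

import Mathlib

open scoped BigOperators

/-- The real-coordinate vector attached to an integer vector. -/
def toR {n : ℕ} (u : Fin n → ℤ) : Fin n → ℝ := fun j => (u j : ℝ)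

/-- The rational polyhedral cone generated by integer vectors `v 0, …, v (r-1)`:
all nonnegative real linear combinations of the generators. -/
def coneOf {n r : ℕ} (v : Fin r → (Fin n → ℤ)) : Set (Fin n → ℝ) :=
  { x | ∃ c : Fin r → ℝ, (∀ i, 0 ≤ c i) ∧ x = ∑ i, c i • toR (v i) }

/-- The lattice points of a subset of `ℝⁿ`: `S_σ = σ ∩ ℤⁿ`. -/
def latticePoints {n : ℕ} (σ : Set (Fin n → ℝ)) : Set (Fin n → ℤ) :=
  { u | toR u ∈ σ }

/-- `u` is an irreducible element of `S`: it is a nonzero element of `S` which cannot be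
written as the sum of two nonzero elements of `S`. -/
def IsIrreducibleElt {n : ℕ} (S : Set (Fin n → ℤ)) (u : Fin n → ℤ) : Prop :=
  u ∈ S ∧ u ≠ 0 ∧ ∀ a b : Fin n → ℤ, a ∈ S → b ∈ S → u = a + b → a = 0 ∨ b = 0

/-- The Hilbert basis of (the monoid of lattice points of) a cone:
the set of its irreducible elements. -/
def hilbertBasis {n : ℕ} (S : Set (Fin n → ℤ)) : Set (Fin n → ℤ) :=
  { u | IsIrreducibleElt S u }

lemma mem_S_iff (u : Fin 3 → ℤ) :
    u ∈ latticePoints (coneOf ![![0, 1, 0], ![0, 0, 1], ![6, 8, 9]]) ↔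
      0 ≤ u 0 ∧ 4 * u 0 ≤ 3 * u 1 ∧ 3 * u 0 ≤ 2 * u 2 := by
  constructor
  · rintro ⟨c, hc, h⟩
    have h0 := congrFun h 0
    have h1 := congrFun h 1
    have h2 := congrFun h 2
    simp [toR, Fin.sum_univ_three] at h0 h1 h2
    have c0 := hc 0; have c1 := hc 1; have c2 := hc 2
    have r0 : (0:ℝ) ≤ (u 0 : ℝ) := by rw [h0]; linarith
    have r1 : 4 * (u 0 : ℝ) ≤ 3 * (u 1 : ℝ) := by rw [h0, h1]; linarith
    have r2 : 3 * (u 0 : ℝ) ≤ 2 * (u 2 : ℝ) := by rw [h0, h2]; linarith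
    exact ⟨by exact_mod_cast r0, by exact_mod_cast r1, by exact_mod_cast r2⟩
  · rintro ⟨h0, h1, h2⟩
    have r0 : (0:ℝ) ≤ (u 0 : ℝ) := by exact_mod_cast h0
    have r1 : 4 * (u 0 : ℝ) ≤ 3 * (u 1 : ℝ) := by exact_mod_cast h1
    have r2 : 3 * (u 0 : ℝ) ≤ 2 * (u 2 : ℝ) := by exact_mod_cast h2
    refine ⟨![(u 1 : ℝ) - 4/3 * (u 0), (u 2 : ℝ) - 3/2 * (u 0), (u 0 : ℝ)/6], ?_, ?_⟩
    · intro i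
      fin_cases i <;> simp <;> linarith
    · funext j
      fin_cases j <;> simp [toR, Fin.sum_univ_three] <;> ring

def Bset : Set (Fin 3 → ℤ) :=
  {![0, 1, 0], ![0, 0, 1], ![6, 8, 9], ![1, 2, 2], ![2, 3, 3], ![3, 4, 5]}

lemma gen_aux : ∀ N : ℕ, ∀ u : Fin 3 → ℤ, 0 ≤ u 0 → 4 * u 0 ≤ 3 * u 1 → 3 * u 0 ≤ 2 * u 2 →
    (u 0 + u 1 + u 2).toNat ≤ N → u ∈ AddSubmonoid.closure Bset := by
  intro N
  induction N with
  | zero =>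
    intro u h0 h1 h2 hN
    have hu : u = 0 := by
      funext j; fin_cases j <;> simp <;> omega
    rw [hu]; exact zero_mem _
  | succ N ih =>
    intro u h0 h1 h2 hN
    by_cases hz : u = 0
    · rw [hz]; exact zero_mem _
    have hz' : ¬(u 0 = 0 ∧ u 1 = 0 ∧ u 2 = 0) := by
      rintro ⟨a, b, c⟩
      exact hz (by funext j; fin_cases j <;> simpa)
    have step : ∀ g : Fin 3 → ℤ, g ∈ Bset →
        0 ≤ u 0 - g 0 → 4 * (u 0 - g 0) ≤ 3 * (u 1 - g 1) → 3 * (u 0 - g 0) ≤ 2 * (u 2 - g 2) →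
        (u 0 - g 0 + (u 1 - g 1) + (u 2 - g 2)).toNat ≤ N → u ∈ AddSubmonoid.closure Bset := by
      intro g hg k0 k1 k2 kN
      have : u = g + (u - g) := by abel
      rw [this]
      exact add_mem (AddSubmonoid.subset_closure hg) (ih (u - g) k0 k1 k2 kN)
    rcases lt_or_ge (u 0) 6 with h6 | h6
    · interval_cases h : (u 0)
      · -- u 0 = 0
        rcases lt_or_ge 0 (u 1) with hy | hy
        · exact step ![0,1,0] (by simp [Bset]) (by simp only [Matrix.cons_val_zero, Matrix.cons_val_one, Matrix.cons_val_two, Matrix.tail_cons, Matrix.head_cons]; omega) (by simp only [Matrix.cons_val_zero, Matrix.cons_val_one, Matrix.cons_val_two, Matrix.tail_cons, Matrix.head_cons]; omega)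
            (by simp only [Matrix.cons_val_zero, Matrix.cons_val_one, Matrix.cons_val_two, Matrix.tail_cons, Matrix.head_cons]; omega) (by simp only [Matrix.cons_val_zero, Matrix.cons_val_one, Matrix.cons_val_two, Matrix.tail_cons, Matrix.head_cons]; omega)
        · exact step ![0,0,1] (by simp [Bset]) (by simp only [Matrix.cons_val_zero, Matrix.cons_val_one, Matrix.cons_val_two, Matrix.tail_cons, Matrix.head_cons]; omega) (by simp only [Matrix.cons_val_zero, Matrix.cons_val_one, Matrix.cons_val_two, Matrix.tail_cons, Matrix.head_cons]; omega)
            (by simp only [Matrix.cons_val_zero, Matrix.cons_val_one, Matrix.cons_val_two, Matrix.tail_cons, Matrix.head_cons]; omega) (by simp only [Matrix.cons_val_zero, Matrix.cons_val_one, Matrix.cons_val_two, Matrix.tail_cons, Matrix.head_cons]; omega)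
      · exact step ![1,2,2] (by simp [Bset]) (by simp only [Matrix.cons_val_zero, Matrix.cons_val_one, Matrix.cons_val_two, Matrix.tail_cons, Matrix.head_cons]; omega) (by simp only [Matrix.cons_val_zero, Matrix.cons_val_one, Matrix.cons_val_two, Matrix.tail_cons, Matrix.head_cons]; omega)
          (by simp only [Matrix.cons_val_zero, Matrix.cons_val_one, Matrix.cons_val_two, Matrix.tail_cons, Matrix.head_cons]; omega) (by simp only [Matrix.cons_val_zero, Matrix.cons_val_one, Matrix.cons_val_two, Matrix.tail_cons, Matrix.head_cons]; omega)
      · exact step ![2,3,3] (by simp [Bset]) (by simp only [Matrix.cons_val_zero, Matrix.cons_val_one, Matrix.cons_val_two, Matrix.tail_cons, Matrix.head_cons]; omega) (by simp only [Matrix.cons_val_zero, Matrix.cons_val_one, Matrix.cons_val_two, Matrix.tail_cons, Matrix.head_cons]; omega)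
          (by simp only [Matrix.cons_val_zero, Matrix.cons_val_one, Matrix.cons_val_two, Matrix.tail_cons, Matrix.head_cons]; omega) (by simp only [Matrix.cons_val_zero, Matrix.cons_val_one, Matrix.cons_val_two, Matrix.tail_cons, Matrix.head_cons]; omega)
      · exact step ![3,4,5] (by simp [Bset]) (by simp only [Matrix.cons_val_zero, Matrix.cons_val_one, Matrix.cons_val_two, Matrix.tail_cons, Matrix.head_cons]; omega) (by simp only [Matrix.cons_val_zero, Matrix.cons_val_one, Matrix.cons_val_two, Matrix.tail_cons, Matrix.head_cons]; omega)
          (by simp only [Matrix.cons_val_zero, Matrix.cons_val_one, Matrix.cons_val_two, Matrix.tail_cons, Matrix.head_cons]; omega) (by simp only [Matrix.cons_val_zero, Matrix.cons_val_one, Matrix.cons_val_two, Matrix.tail_cons, Matrix.head_cons]; omega)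
      · exact step ![2,3,3] (by simp [Bset]) (by simp only [Matrix.cons_val_zero, Matrix.cons_val_one, Matrix.cons_val_two, Matrix.tail_cons, Matrix.head_cons]; omega) (by simp only [Matrix.cons_val_zero, Matrix.cons_val_one, Matrix.cons_val_two, Matrix.tail_cons, Matrix.head_cons]; omega)
          (by simp only [Matrix.cons_val_zero, Matrix.cons_val_one, Matrix.cons_val_two, Matrix.tail_cons, Matrix.head_cons]; omega) (by simp only [Matrix.cons_val_zero, Matrix.cons_val_one, Matrix.cons_val_two, Matrix.tail_cons, Matrix.head_cons]; omega)
      · exact step ![2,3,3] (by simp [Bset]) (by simp only [Matrix.cons_val_zero, Matrix.cons_val_one, Matrix.cons_val_two, Matrix.tail_cons, Matrix.head_cons]; omega) (by simp only [Matrix.cons_val_zero, Matrix.cons_val_one, Matrix.cons_val_two, Matrix.tail_cons, Matrix.head_cons]; omega)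
          (by simp only [Matrix.cons_val_zero, Matrix.cons_val_one, Matrix.cons_val_two, Matrix.tail_cons, Matrix.head_cons]; omega) (by simp only [Matrix.cons_val_zero, Matrix.cons_val_one, Matrix.cons_val_two, Matrix.tail_cons, Matrix.head_cons]; omega)
    · exact step ![6,8,9] (by simp [Bset]) (by simp only [Matrix.cons_val_zero, Matrix.cons_val_one, Matrix.cons_val_two, Matrix.tail_cons, Matrix.head_cons]; omega) (by simp only [Matrix.cons_val_zero, Matrix.cons_val_one, Matrix.cons_val_two, Matrix.tail_cons, Matrix.head_cons]; omega)
        (by simp only [Matrix.cons_val_zero, Matrix.cons_val_one, Matrix.cons_val_two, Matrix.tail_cons, Matrix.head_cons]; omega) (by simp only [Matrix.cons_val_zero, Matrix.cons_val_one, Matrix.cons_val_two, Matrix.tail_cons, Matrix.head_cons]; omega)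

def Mcone : AddSubmonoid (Fin 3 → ℤ) where
  carrier := {u | 0 ≤ u 0 ∧ 4 * u 0 ≤ 3 * u 1 ∧ 3 * u 0 ≤ 2 * u 2}
  zero_mem' := by simp
  add_mem' := by
    intro a b ha hb
    simp only [Set.mem_setOf_eq, Pi.add_apply] at *
    omega

lemma closure_eq :
    (AddSubmonoid.closure Bset : Set (Fin 3 → ℤ)) =
      latticePoints (coneOf ![![0, 1, 0], ![0, 0, 1], ![6, 8, 9]]) := by
  ext u
  constructor
  · intro hu
    rw [mem_S_iff]
    have : u ∈ Mcone := by
      revert hu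
      refine fun hu => AddSubmonoid.closure_le.2 ?_ hu
      rintro x (rfl | rfl | rfl | rfl | rfl | rfl) <;>
        constructor <;> norm_num <;> decide
    exact this
  · intro hu
    rw [mem_S_iff] at hu
    exact gen_aux (u 0 + u 1 + u 2).toNat u hu.1 hu.2.1 hu.2.2 le_rfl

lemma irred_aux (g : Fin 3 → ℤ)
    (hgS : 0 ≤ g 0 ∧ 4 * g 0 ≤ 3 * g 1 ∧ 3 * g 0 ≤ 2 * g 2)
    (hg0 : ¬(g 0 = 0 ∧ g 1 = 0 ∧ g 2 = 0))
    (H : ∀ a0 a1 a2 b0 b1 b2 : ℤ, 0 ≤ a0 → 4 * a0 ≤ 3 * a1 → 3 * a0 ≤ 2 * a2 →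
      0 ≤ b0 → 4 * b0 ≤ 3 * b1 → 3 * b0 ≤ 2 * b2 →
      g 0 = a0 + b0 → g 1 = a1 + b1 → g 2 = a2 + b2 →
      (a0 = 0 ∧ a1 = 0 ∧ a2 = 0) ∨ (b0 = 0 ∧ b1 = 0 ∧ b2 = 0)) :
    IsIrreducibleElt (latticePoints (coneOf ![![0, 1, 0], ![0, 0, 1], ![6, 8, 9]])) g := by
  refine ⟨(mem_S_iff g).2 hgS, ?_, ?_⟩
  · intro h
    exact hg0 ⟨by rw [h]; rfl, by rw [h]; rfl, by rw [h]; rfl⟩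
  · intro a b ha hb hab
    rw [mem_S_iff] at ha hb
    have e0 := congrFun hab 0
    have e1 := congrFun hab 1
    have e2 := congrFun hab 2
    simp only [Pi.add_apply] at e0 e1 e2
    rcases H (a 0) (a 1) (a 2) (b 0) (b 1) (b 2) ha.1 ha.2.1 ha.2.2 hb.1 hb.2.1 hb.2.2
      e0 e1 e2 with ⟨k0, k1, k2⟩ | ⟨k0, k1, k2⟩
    · left; funext j; fin_cases j <;> simpa
    · right; funext j; fin_cases j <;> simpa

lemma decomp (u : Fin 3 → ℤ) (hu : u ∈ AddSubmonoid.closure Bset) :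
    u = 0 ∨ ∃ g ∈ Bset, ∃ v ∈ AddSubmonoid.closure Bset, u = g + v := by
  induction hu using AddSubmonoid.closure_induction with
  | mem x hx => exact Or.inr ⟨x, hx, 0, zero_mem _, (add_zero x).symm⟩
  | zero => exact Or.inl rfl
  | add x y hx hy ihx ihy =>
    rcases ihx with rfl | ⟨g, hg, v, hv, rfl⟩
    · simpa using ihy
    · exact Or.inr ⟨g, hg, v + y, add_mem hv hy, by abel⟩

/-- the Hilbert basis of the cone `σ₃ = ⟨(0,1,0),(0,0,1),(6,8,9)⟩` of the
dual Newton polyhedron of `y³ + xz² − x⁴ = 0` is exactly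
`{(0,1,0),(0,0,1),(6,8,9),(1,2,2),(2,3,3),(3,4,5)}`, and these six vectors generate the
monoid `S_{σ₃} = σ₃ ∩ ℤ³`. -/
theorem elliptic_sigma3_hilbert_basis :
    let S := latticePoints (coneOf ![![0, 1, 0], ![0, 0, 1], ![6, 8, 9]])
    let B : Set (Fin 3 → ℤ) :=
      {![0, 1, 0], ![0, 0, 1], ![6, 8, 9], ![1, 2, 2], ![2, 3, 3], ![3, 4, 5]}
    hilbertBasis S = B ∧ (AddSubmonoid.closure B : Set (Fin 3 → ℤ)) = S := by
  intro S B
  have hBB : B = Bset := rfl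
  refine ⟨?_, closure_eq⟩
  ext u
  constructor
  · rintro ⟨huS, hu0, hirr⟩
    have hucl : u ∈ AddSubmonoid.closure Bset := (Set.ext_iff.1 closure_eq u).2 huS
    rcases decomp u hucl with rfl | ⟨g, hg, v, hv, rfl⟩
    · exact absurd rfl hu0
    · have hgS : g ∈ S := (Set.ext_iff.1 closure_eq g).1 (AddSubmonoid.subset_closure hg)
      have hvS : v ∈ S := (Set.ext_iff.1 closure_eq v).1 hv
      have hgne : g ≠ 0 := by
        rcases hg with rfl | rfl | rfl | rfl | rfl | rfl <;>
          · intro h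
            have e0 := congrFun h 0
            have e1 := congrFun h 1
            have e2 := congrFun h 2
            simp at e0 e1 e2
      rcases hirr g v hgS hvS rfl with rfl | rfl
      · exact absurd rfl hgne
      · simpa [hBB] using hg
  · intro hu
    rcases hu with rfl | rfl | rfl | rfl | rfl | rfl <;>
      [ refine irred_aux _ (by norm_num <;> decide) (by norm_num <;> decide) ?_;
        refine irred_aux _ (by norm_num <;> decide) (by norm_num <;> decide) ?_;
        refine irred_aux _ (by norm_num <;> decide) (by norm_num <;> decide) ?_;
        refine irred_aux _ (by norm_num <;> decide) (by norm_num <;> decide) ?_;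
        refine irred_aux _ (by norm_num <;> decide) (by norm_num <;> decide) ?_;
        refine irred_aux _ (by norm_num <;> decide) (by norm_num <;> decide) ?_ ] <;>
      · intro a0 a1 a2 b0 b1 b2 h1 h2 h3 h4 h5 h6 e1 e2 e3
        simp only [Matrix.cons_val_zero, Matrix.cons_val_one, Matrix.cons_val_two,
          Matrix.tail_cons, Matrix.head_cons] at e1 e2 e3
        omega
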